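/- Let r₁, r₂ ≥ 1 and let m_{1,2} ≤ ⋯ ≤ m_{r₂,2} and m_{1,1} ≤ ⋯ ≤ m_{r₁,1} ≤ −1 be integers with m_{r₂,2} ≥ r₁ − 1. Then the element x_{α₂}(m_{1,2})⋯x_{α₂}(m_{r₂,2})·x_{α₁}(m_{1,1})⋯x_{α₁}(m_{r₁,1}) of U(n̄) is a ℂ-linear combination of elements x_{α₂}(m'_{1,2})⋯x_{α₂}(m'_{r₂,2})·x_{α₁}(m'_{1,1})⋯x_{α₁}(m'_{r₁,1}) with m'_{1,2} ≤ ⋯ ≤ m'_{r₂,2} ≤ r₁ − 2, m'_{1,1} ≤ ⋯ ≤ m'_{r₁,1} ≤ −1 and with the same total index sum, plus an element of the left ideal U(n̄)n̄⁺, plus an element of the left ideal U(n̄)·x_{α₂}(−1) (the left ideal generated by x_{α₂}(−1)). -/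

import Mathlib

open scoped TensorProduct

attribute [local instance 100] LieRing.ofAssociativeRing

noncomputable section

/-- 3×3 complex matrices 𝔤𝔩(3,ℂ), with the commutator Lie bracket. -/
abbrev Mat3 : Type := Matrix (Fin 3) (Fin 3) ℂ

lemma upperTri_mul {a b : Mat3} (ha : ∀ i j : Fin 3, j ≤ i → a i j = 0)
    (hb : ∀ i j : Fin 3, j ≤ i → b i j = 0) :
    ∀ i j : Fin 3, j ≤ i → (a * b) i j = 0 := by
  intro i j hij
  rw [Matrix.mul_apply]
  refine Finset.sum_eq_zero fun k _ => ?_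
  by_cases hk : k ≤ i
  · rw [ha i k hk, zero_mul]
  · rw [hb k j (hij.trans (not_le.mp hk).le), mul_zero]

/-- The Lie algebra 𝔫 of strictly upper triangular 3×3 complex matrices. -/
def strictUpper : LieSubalgebra ℂ Mat3 where
  carrier := {M : Mat3 | ∀ i j : Fin 3, j ≤ i → M i j = 0}
  add_mem' := fun {a b} ha hb i j hij => by
    simp only [Matrix.add_apply, ha i j hij, hb i j hij, add_zero]
  zero_mem' := fun i j _ => rfl
  smul_mem' := fun c a ha i j hij => by
    simp only [Matrix.smul_apply, ha i j hij, smul_zero]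
  lie_mem' := fun {a b} ha hb i j hij => by
    rw [Ring.lie_def, Matrix.sub_apply, upperTri_mul ha hb i j hij,
      upperTri_mul hb ha i j hij, sub_zero]

/-- x_{α₁} = E₁₂ ∈ 𝔫. -/
def xa1 : strictUpper :=
  ⟨Matrix.single 0 1 1, by
    intro i j hij
    fin_cases i <;> fin_cases j <;> simp_all [Matrix.single, Matrix.of_apply]⟩

/-- x_{α₂} = E₂₃ ∈ 𝔫. -/
def xa2 : strictUpper :=
  ⟨Matrix.single 1 2 1, by
    intro i j hij
    fin_cases i <;> fin_cases j <;> simp_all [Matrix.single, Matrix.of_apply]⟩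

/-- x_{α₁+α₂} = E₁₃ ∈ 𝔫. -/
def xa12 : strictUpper :=
  ⟨Matrix.single 0 2 1, by
    intro i j hij
    fin_cases i <;> fin_cases j <;> simp_all [Matrix.single, Matrix.of_apply]⟩

/-- The loop algebra n̄ = ℂ[t,t⁻¹] ⊗_ℂ 𝔫, with bracket
`[tᵐ ⊗ x, tⁿ ⊗ y] = t^{m+n} ⊗ [x,y]`. -/
abbrev loopN : Type := LaurentPolynomial ℂ ⊗[ℂ] strictUpper

/-- n̄ is a Lie algebra over ℂ (by restriction of scalars from ℂ[t,t⁻¹]). -/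
instance : LieAlgebra ℂ loopN where
  lie_smul c x y := by
    rw [← algebraMap_smul (LaurentPolynomial ℂ) c y,
      ← algebraMap_smul (LaurentPolynomial ℂ) c ⁅x, y⁆]
    exact lie_smul ((algebraMap ℂ (LaurentPolynomial ℂ)) c) x y

/-- The universal enveloping algebra U(n̄) over ℂ. -/
abbrev Uenv : Type := UniversalEnvelopingAlgebra ℂ loopN

/-- x(m) = tᵐ ⊗ x, viewed as an element of U(n̄). -/
def XX (x : strictUpper) (m : ℤ) : Uenv :=
  UniversalEnvelopingAlgebra.ι ℂ (LaurentPolynomial.T m ⊗ₜ[ℂ] x)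

/-- The ordered monomial x(m₁)⋯x(m_r) ∈ U(n̄) attached to a single root vector
`a` and a sequence of integers `m`. -/
def monom {r : ℕ} (a : strictUpper) (m : Fin r → ℤ) : Uenv :=
  (List.ofFn fun i => XX a (m i)).prod

/-- The left ideal U(n̄)n̄⁺ of U(n̄), generated by the x(m) with x ∈ 𝔫, m ≥ 0. -/
def UNplus : Ideal Uenv :=
  Ideal.span {u : Uenv | ∃ (x : strictUpper) (m : ℤ), 0 ≤ m ∧ u = XX x m}

/-- The truncated relation R^{[j]}_{t;m} = Σ_{m₁,m₂ ≤ m, m₁+m₂=t} x_{α_j}(m₁)x_{α_j}(m₂)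
(here `a` stands for the root vector x_{α_j}). -/
def Rtrunc (a : strictUpper) (t m : ℤ) : Uenv :=
  ∑ k ∈ Finset.Icc (t - m) m, XX a k * XX a (t - k)

/-- The two-sided ideal 𝒥 of U(n̄) generated by all R^{[j]}_{t;m}, j ∈ {1,2}. -/
def Jideal : TwoSidedIdeal Uenv :=
  TwoSidedIdeal.span {u : Uenv | ∃ t m : ℤ, u = Rtrunc xa1 t m ∨ u = Rtrunc xa2 t m}

/-- The difference two condition on a sequence m₁, …, m_r. -/
def diffTwo {r : ℕ} (m : Fin r → ℤ) : Prop :=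
  ∀ i j : Fin r, (i : ℕ) + 1 = (j : ℕ) → m i + 2 ≤ m j

lemma XX_neg (x : strictUpper) (m : ℤ) : XX (-x) m = - XX x m := by
  unfold XX
  rw [TensorProduct.tmul_neg, map_neg]

lemma XX_comm (x y : strictUpper) (m n : ℤ) :
    XX x m * XX y n = XX y n * XX x m + XX ⁅x, y⁆ (m+n) := by
  have h : UniversalEnvelopingAlgebra.ι ℂ
        (⁅(LaurentPolynomial.T m ⊗ₜ[ℂ] x : loopN), (LaurentPolynomial.T n ⊗ₜ[ℂ] y : loopN)⁆)
      = ⁅UniversalEnvelopingAlgebra.ι ℂ (LaurentPolynomial.T m ⊗ₜ[ℂ] x : loopN),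
         UniversalEnvelopingAlgebra.ι ℂ (LaurentPolynomial.T n ⊗ₜ[ℂ] y : loopN)⁆ :=
    LieHom.map_lie _ _ _
  rw [LieAlgebra.ExtendScalars.bracket_tmul, ← LaurentPolynomial.T_add, Ring.lie_def] at h
  have h2 : XX ⁅x,y⁆ (m+n) = XX x m * XX y n - XX y n * XX x m := h
  rw [h2]
  abel

lemma bra_12 : ⁅(xa1 : strictUpper), xa2⁆ = xa12 := by
  apply Subtype.ext
  rw [LieSubalgebra.coe_bracket, Ring.lie_def]
  show (Matrix.single 0 1 (1:ℂ)) * (Matrix.single 1 2 (1:ℂ))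
      - (Matrix.single 1 2 (1:ℂ)) * (Matrix.single 0 1 (1:ℂ))
      = Matrix.single 0 2 (1:ℂ)
  ext i j
  fin_cases i <;> fin_cases j <;>
    simp [Matrix.mul_apply, Matrix.single, Fin.sum_univ_three]

lemma bra_1_12 : ⁅(xa1 : strictUpper), xa12⁆ = 0 := by
  apply Subtype.ext
  rw [LieSubalgebra.coe_bracket, Ring.lie_def]
  show (Matrix.single 0 1 (1:ℂ)) * (Matrix.single 0 2 (1:ℂ))
      - (Matrix.single 0 2 (1:ℂ)) * (Matrix.single 0 1 (1:ℂ)) = 0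
  ext i j
  fin_cases i <;> fin_cases j <;>
    simp [Matrix.mul_apply, Matrix.single, Fin.sum_univ_three]

lemma bra_2_12 : ⁅(xa2 : strictUpper), xa12⁆ = 0 := by
  apply Subtype.ext
  rw [LieSubalgebra.coe_bracket, Ring.lie_def]
  show (Matrix.single 1 2 (1:ℂ)) * (Matrix.single 0 2 (1:ℂ))
      - (Matrix.single 0 2 (1:ℂ)) * (Matrix.single 1 2 (1:ℂ)) = 0
  ext i j
  fin_cases i <;> fin_cases j <;>
    simp [Matrix.mul_apply, Matrix.single, Fin.sum_univ_three]

lemma XX_swap (a b : ℤ) :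
    XX xa2 a * XX xa1 b = XX xa1 b * XX xa2 a - XX xa12 (a+b) := by
  have h2 : ⁅(xa2 : strictUpper), xa1⁆ = -xa12 := by rw [← lie_skew, bra_12]
  have h := XX_comm xa2 xa1 a b
  rw [h2, XX_neg] at h
  rw [h]; abel

lemma XX_commute_self (x : strictUpper) (m n : ℤ) : Commute (XX x m) (XX x n) := by
  have h := XX_comm x x m n
  rw [lie_self] at h
  have hz : XX (0 : strictUpper) (m+n) = 0 := by
    unfold XX; rw [TensorProduct.tmul_zero, map_zero]
  rw [hz, add_zero] at h
  exact h

lemma XX_commute_of_lie_eq_zero {x y : strictUpper} (h0 : ⁅x, y⁆ = 0) (m n : ℤ) :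
    Commute (XX x m) (XX y n) := by
  have h := XX_comm x y m n
  rw [h0] at h
  have hz : XX (0 : strictUpper) (m+n) = 0 := by
    unfold XX; rw [TensorProduct.tmul_zero, map_zero]
  rw [hz, add_zero] at h
  exact h

/-- Ordered products of `x_{α₁}` modes. -/
def P1 (l : List ℤ) : Uenv := (l.map (XX xa1)).prod
/-- Ordered products of `x_{α₂}` modes. -/
def P2 (l : List ℤ) : Uenv := (l.map (XX xa2)).prod

lemma pairwise_all {α : Type*} (R : α → α → Prop) (h : ∀ a b, R a b) :
    ∀ l : List α, l.Pairwise R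
  | [] => .nil
  | a :: t => .cons (fun b _ => h a b) (pairwise_all R h t)

lemma P1_perm {l l' : List ℤ} (h : l.Perm l') : P1 l = P1 l' :=
  List.Perm.prod_eq' (h.map (XX xa1))
    (List.pairwise_map.mpr (pairwise_all _ (fun a b => XX_commute_self xa1 a b) l))

lemma P2_perm {l l' : List ℤ} (h : l.Perm l') : P2 l = P2 l' :=
  List.Perm.prod_eq' (h.map (XX xa2))
    (List.pairwise_map.mpr (pairwise_all _ (fun a b => XX_commute_self xa2 a b) l))

lemma P1_cons (n : ℤ) (l : List ℤ) : P1 (n :: l) = XX xa1 n * P1 l := by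
  simp [P1]

lemma P2_append (l l' : List ℤ) : P2 (l ++ l') = P2 l * P2 l' := by
  simp [P2]

lemma P1_mul_x1 (l : List ℤ) (n : ℤ) : P1 l * XX xa1 n = XX xa1 n * P1 l := by
  have := Commute.list_prod_left (l.map (XX xa1)) (XX xa1 n) ?_
  · exact this
  · intro x hx
    obtain ⟨b, _, rfl⟩ := List.mem_map.mp hx
    exact XX_commute_self xa1 b n

/-- The combined left ideal U(n̄)n̄⁺ + U(n̄)x_{α₂}(−1). -/
def Iall : Ideal Uenv := UNplus ⊔ Ideal.span {XX xa2 (-1)}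

/-- The recursive alternating element with the x₂ factor on the right. -/
def BB : ℤ → List ℤ → Uenv
  | a, [] => XX xa2 a
  | a, n :: l => XX xa1 n * BB a l - XX xa1 (n+1) * BB (a-1) l

/-- The recursive alternating element with the x₂ factor on the left. -/
def AA : ℤ → List ℤ → Uenv
  | a, [] => XX xa2 a
  | a, n :: l => AA a l * XX xa1 n - AA (a-1) l * XX xa1 (n+1)

lemma BB_mem : ∀ (l : List ℤ) (a : ℤ), (l.length : ℤ) ≤ a + 1 → BB a l ∈ Iall
  | [], a, ha => by
      simp only [BB]
      rcases le_or_gt 0 a with h0 | h0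
      · exact Submodule.mem_sup_left (Ideal.subset_span ⟨xa2, a, h0, rfl⟩)
      · have : a = -1 := by simp at ha; omega
        subst this
        exact Submodule.mem_sup_right (Ideal.subset_span rfl)
  | n :: l, a, ha => by
      have hlen : (l.length : ℤ) ≤ a := by
        simp only [List.length_cons] at ha; push_cast at ha ⊢; omega
      have h1 : BB a l ∈ Iall := BB_mem l a (by omega)
      have h2 : BB (a-1) l ∈ Iall := BB_mem l (a-1) (by omega)
      simp only [BB]
      exact Ideal.sub_mem _ (Ideal.mul_mem_left _ _ h1) (Ideal.mul_mem_left _ _ h2)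

lemma BB_comm : ∀ (l : List ℤ) (a n : ℤ),
    BB a l * XX xa1 n - XX xa1 n * BB a l
      = BB (a-1) l * XX xa1 (n+1) - XX xa1 (n+1) * BB (a-1) l
  | [], a, n => by
      simp only [BB]
      rw [XX_swap a n, XX_swap (a-1) (n+1)]
      have e : a - 1 + (n + 1) = a + n := by ring
      rw [e]
      abel
  | m :: l, a, n => by
      have expand : ∀ (B C : Uenv) (q : ℤ),
          (XX xa1 m * B - XX xa1 (m+1) * C) * XX xa1 q
            - XX xa1 q * (XX xa1 m * B - XX xa1 (m+1) * C)
          = XX xa1 m * (B * XX xa1 q - XX xa1 q * B)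
            - XX xa1 (m+1) * (C * XX xa1 q - XX xa1 q * C) := by
        intro B C q
        have c1 : XX xa1 q * (XX xa1 m * B) = XX xa1 m * (XX xa1 q * B) := by
          rw [← mul_assoc, ← (XX_commute_self xa1 m q).eq, mul_assoc]
        have c2 : XX xa1 q * (XX xa1 (m+1) * C) = XX xa1 (m+1) * (XX xa1 q * C) := by
          rw [← mul_assoc, ← (XX_commute_self xa1 (m+1) q).eq, mul_assoc]
        simp only [mul_sub, sub_mul, mul_assoc]
        rw [c1, c2]
        abel
      simp only [BB]
      rw [expand, expand, BB_comm l a n, BB_comm l (a-1) n]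

lemma AA_eq_BB : ∀ (l : List ℤ) (a : ℤ), AA a l = BB a l
  | [], a => rfl
  | n :: l, a => by
      simp only [AA, BB, AA_eq_BB l]
      have h := BB_comm l a n
      have h2 : BB a l * XX xa1 n
          = XX xa1 n * BB a l + (BB (a-1) l * XX xa1 (n+1) - XX xa1 (n+1) * BB (a-1) l) := by
        rw [← h]; abel
      rw [h2]; abel

/-- Monomials with strictly smaller x₂-mode (used in the expansion of `AA`). -/
def lowSet (a : ℤ) (l : List ℤ) : Set Uenv :=
  {u | ∃ a' l', a' < a ∧ l'.length = l.length ∧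
      (∀ x ∈ l', ∃ y ∈ l, x = y ∨ x = y + 1) ∧ a' + l'.sum = a + l.sum ∧
      u = XX xa2 a' * P1 l'}

lemma span_mul_right (S T : Set Uenv) (v : Uenv)
    (h : ∀ u ∈ S, u * v ∈ Submodule.span ℂ T) :
    ∀ w ∈ Submodule.span ℂ S, w * v ∈ Submodule.span ℂ T := by
  intro w hw
  have hle : Submodule.span ℂ S ≤ (Submodule.span ℂ T).comap (LinearMap.mulRight ℂ v) :=
    Submodule.span_le.mpr h
  exact hle hw

lemma AA_sub : ∀ (l : List ℤ) (a : ℤ),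
    XX xa2 a * P1 l - AA a l ∈ Submodule.span ℂ (lowSet a l)
  | [], a => by
      simp [P1, AA]
  | n :: l, a => by
      have c1 : P1 l * XX xa1 n = XX xa1 n * P1 l := P1_mul_x1 l n
      have c2 : P1 l * XX xa1 (n+1) = XX xa1 (n+1) * P1 l := P1_mul_x1 l (n+1)
      have hid : XX xa2 a * P1 (n :: l) - AA a (n :: l)
          = (XX xa2 a * P1 l - AA a l) * XX xa1 n
            - (XX xa2 (a-1) * P1 l - AA (a-1) l) * XX xa1 (n+1)
            + XX xa2 (a-1) * P1 ((n+1) :: l) := by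
        simp only [P1_cons, AA]
        simp only [sub_mul, mul_assoc]
        rw [c1, c2]
        abel
      rw [hid]
      have mem1 : (XX xa2 a * P1 l - AA a l) * XX xa1 n
          ∈ Submodule.span ℂ (lowSet a (n :: l)) := by
        refine span_mul_right (lowSet a l) _ (XX xa1 n) ?_ _ (AA_sub l a)
        rintro u ⟨a', l', hlt, hlen, hent, hsum, rfl⟩
        apply Submodule.subset_span
        refine ⟨a', n :: l', hlt, by simp [hlen], ?_, ?_, ?_⟩
        · intro x hx
          rcases List.mem_cons.mp hx with h | h
          · exact ⟨n, List.mem_cons_self, Or.inl h⟩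
          · obtain ⟨y, hy, hxy⟩ := hent x h
            exact ⟨y, List.mem_cons_of_mem n hy, hxy⟩
        · simp only [List.sum_cons]; omega
        · rw [mul_assoc, P1_cons, P1_mul_x1 l' n]
      have mem2 : (XX xa2 (a-1) * P1 l - AA (a-1) l) * XX xa1 (n+1)
          ∈ Submodule.span ℂ (lowSet a (n :: l)) := by
        refine span_mul_right (lowSet (a-1) l) _ (XX xa1 (n+1)) ?_ _ (AA_sub l (a-1))
        rintro u ⟨a', l', hlt, hlen, hent, hsum, rfl⟩
        apply Submodule.subset_span
        refine ⟨a', (n+1) :: l', by omega, by simp [hlen], ?_, ?_, ?_⟩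
        · intro x hx
          rcases List.mem_cons.mp hx with h | h
          · exact ⟨n, List.mem_cons_self, Or.inr h⟩
          · obtain ⟨y, hy, hxy⟩ := hent x h
            exact ⟨y, List.mem_cons_of_mem n hy, hxy⟩
        · simp only [List.sum_cons]; omega
        · rw [mul_assoc, P1_cons, P1_mul_x1 l' (n+1)]
      have mem3 : XX xa2 (a-1) * P1 ((n+1) :: l)
          ∈ Submodule.span ℂ (lowSet a (n :: l)) := by
        apply Submodule.subset_span
        refine ⟨a-1, (n+1) :: l, by omega, by simp, ?_, ?_, rfl⟩
        · intro x hx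
          rcases List.mem_cons.mp hx with h | h
          · exact ⟨n, List.mem_cons_self, Or.inr h⟩
          · exact ⟨x, List.mem_cons_of_mem n h, Or.inl rfl⟩
        · simp only [List.sum_cons]; omega
      exact Submodule.add_mem _ (Submodule.sub_mem _ mem1 mem2) mem3

lemma zeroEntry (a' : ℤ) (l : List ℤ) (h : (0:ℤ) ∈ l) :
    XX xa2 a' * P1 l ∈ UNplus := by
  have hperm : l.Perm (l.erase 0 ++ [0]) :=
    (List.perm_cons_erase h).trans (List.perm_append_singleton 0 (l.erase 0)).symm
  rw [P1_perm hperm]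
  have : P1 (l.erase 0 ++ [0]) = P1 (l.erase 0) * XX xa1 0 := by
    simp [P1]
  rw [this, ← mul_assoc]
  exact Ideal.mul_mem_left _ _ (Ideal.subset_span ⟨xa1, 0, le_refl _, rfl⟩)

/-- Good single-x₂ monomials of weight `w`. -/
def SPa (r1 : ℕ) (w : ℤ) : Set Uenv :=
  {u | ∃ a' l', a' ≤ (r1:ℤ) - 2 ∧ l'.length = r1 ∧ (∀ x ∈ l', x ≤ -1) ∧
      a' + l'.sum = w ∧ u = XX xa2 a' * P1 l'}

def Ka (r1 : ℕ) (w : ℤ) : Submodule ℂ Uenv :=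
  Submodule.span ℂ (SPa r1 w) ⊔ Submodule.restrictScalars ℂ (Iall : Submodule Uenv Uenv)

lemma Iall_le_Ka (r1 : ℕ) (w : ℤ) {u : Uenv} (hu : u ∈ Iall) : u ∈ Ka r1 w :=
  Submodule.mem_sup_right hu

lemma key (r1 : ℕ) : ∀ (t : ℕ) (a : ℤ), a ≤ (r1:ℤ) - 2 + t →
    ∀ l : List ℤ, l.length = r1 → (∀ x ∈ l, x ≤ -1) →
    XX xa2 a * P1 l ∈ Ka r1 (a + l.sum)
  | 0, a, ha, l, hlen, hl =>
      Submodule.mem_sup_left (Submodule.subset_span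
        ⟨a, l, by push_cast at ha ⊢; omega, hlen, hl, rfl, rfl⟩)
  | (t+1), a, ha, l, hlen, hl => by
      rcases le_or_gt a ((r1:ℤ) - 2 + t) with hle | hgt
      · exact key r1 t a hle l hlen hl
      · have hlena : (l.length : ℤ) ≤ a + 1 := by rw [hlen]; omega
        have hsplit : XX xa2 a * P1 l = (XX xa2 a * P1 l - AA a l) + AA a l := by abel
        rw [hsplit]
        apply Submodule.add_mem
        · -- the low part
          have hlow := AA_sub l a
          have hle2 : Submodule.span ℂ (lowSet a l) ≤ Ka r1 (a + l.sum) := by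
            apply Submodule.span_le.mpr
            rintro u ⟨a', l', hlt, hlen', hent, hsum, rfl⟩
            have hent0 : ∀ x ∈ l', x ≤ 0 := by
              intro x hx
              obtain ⟨y, hy, hxy⟩ := hent x hx
              have := hl y hy
              rcases hxy with rfl | rfl <;> omega
            by_cases h0 : (0:ℤ) ∈ l'
            · exact Iall_le_Ka r1 _ (Submodule.mem_sup_left (zeroEntry a' l' h0))
            · have hent1 : ∀ x ∈ l', x ≤ -1 := by
                intro x hx
                have := hent0 x hx
                rcases lt_or_eq_of_le this with h | h
                · omega
                · exact absurd (h ▸ hx) h0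
              have ha' : a' ≤ (r1:ℤ) - 2 + t := by omega
              have := key r1 t a' ha' l' (by rw [hlen', hlen]) hent1
              rw [show a' + l'.sum = a + l.sum by omega] at this
              exact this
          exact hle2 hlow
        · exact Iall_le_Ka r1 _ (AA_eq_BB l a ▸ BB_mem l a hlena)

/-- Good full monomials of weight `w`. -/
def SPfull (r1 r2 : ℕ) (w : ℤ) : Set Uenv :=
  {u | ∃ c l : List ℤ, c.length = r2 ∧ l.length = r1 ∧ (∀ x ∈ c, x ≤ (r1:ℤ) - 2) ∧
      (∀ x ∈ l, x ≤ -1) ∧ c.sum + l.sum = w ∧ u = P2 c * P1 l}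

def Kfull (r1 r2 : ℕ) (w : ℤ) : Submodule ℂ Uenv :=
  Submodule.span ℂ (SPfull r1 r2 w) ⊔ Submodule.restrictScalars ℂ (Iall : Submodule Uenv Uenv)

/-- Excess measure of a list of x₂-modes. -/
def meas (r1 : ℕ) (c : List ℤ) : ℕ := (c.map (fun x => (x - ((r1:ℤ)-2)).toNat)).sum

lemma span_mul_left (S : Set Uenv) (K : Submodule ℂ Uenv) (v : Uenv)
    (h : ∀ u ∈ S, v * u ∈ K) :
    ∀ w ∈ Submodule.span ℂ S, v * w ∈ K := by
  intro w hw
  have hle : Submodule.span ℂ S ≤ K.comap (LinearMap.mulLeft ℂ v) :=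
    Submodule.span_le.mpr h
  exact hle hw

lemma mainlem (r1 r2 : ℕ) : ∀ (μ : ℕ) (c l : List ℤ), meas r1 c ≤ μ →
    c.length = r2 → l.length = r1 → (∀ x ∈ l, x ≤ -1) →
    P2 c * P1 l ∈ Kfull r1 r2 (c.sum + l.sum) := by
  intro μ
  induction μ with
  | zero =>
      intro c l hme hc hl hent
      by_cases hall : ∀ x ∈ c, x ≤ (r1:ℤ) - 2
      · exact Submodule.mem_sup_left (Submodule.subset_span
          ⟨c, l, hc, hl, hall, hent, rfl, rfl⟩)
      · exfalso
        push_neg at hall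
        obtain ⟨x, hx, hxgt⟩ := hall
        have h1 : (x - ((r1:ℤ)-2)).toNat ∈ c.map (fun x => (x - ((r1:ℤ)-2)).toNat) :=
          List.mem_map_of_mem hx
        have h2 := List.single_le_sum (fun y _ => Nat.zero_le y) _ h1
        have h3 : 1 ≤ (x - ((r1:ℤ)-2)).toNat := by omega
        unfold meas at hme
        omega
  | succ μ ih =>
      intro c l hme hc hl hent
      by_cases hall : ∀ x ∈ c, x ≤ (r1:ℤ) - 2
      · exact Submodule.mem_sup_left (Submodule.subset_span
          ⟨c, l, hc, hl, hall, hent, rfl, rfl⟩)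
      · push_neg at hall
        obtain ⟨x, hx, hxgt⟩ := hall
        set e := c.erase x with he
        have hperm : c.Perm (e ++ [x]) :=
          (List.perm_cons_erase hx).trans (List.perm_append_singleton x e).symm
        have hP2 : P2 c = P2 e * XX xa2 x := by
          rw [P2_perm hperm, P2_append]
          simp [P2]
        have hsum : c.sum = e.sum + x := by
          rw [hperm.sum_eq]; simp
        have hlen : e.length + 1 = r2 := by
          have := hperm.length_eq; simp at this; omega
        have hmeas : meas r1 c = meas r1 e + (x - ((r1:ℤ)-2)).toNat := by
          unfold meas
          rw [(hperm.map (fun x => (x - ((r1:ℤ)-2)).toNat)).sum_eq]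
          simp
        have htN : 1 ≤ (x - ((r1:ℤ)-2)).toNat := by omega
        have hme' : meas r1 e ≤ μ := by omega
        -- apply key
        have hkey := key r1 ((x - ((r1:ℤ)-2)).toNat) x
          (by rw [Int.toNat_of_nonneg (by omega)]; omega) l hl hent
        -- multiply by P2 e on the left
        rw [hP2, mul_assoc]
        rcases Submodule.mem_sup.mp hkey with ⟨s, hs, i, hi, hsi⟩
        rw [← hsi, mul_add]
        apply Submodule.add_mem
        · -- span part
          refine span_mul_left (SPa r1 (x + l.sum)) (Kfull r1 r2 (c.sum + l.sum)) (P2 e) ?_ s hs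
          rintro u ⟨a', l', ha', hlen', hent', hsum', rfl⟩
          have : P2 e * (XX xa2 a' * P1 l') = P2 (e ++ [a']) * P1 l' := by
            rw [P2_append, mul_assoc]
            simp [P2]
          rw [this]
          have hmeas2 : meas r1 (e ++ [a']) = meas r1 e := by
            unfold meas
            simp [Int.toNat_of_nonpos (by omega : a' - ((r1:ℤ)-2) ≤ 0)]
          have := ih (e ++ [a']) l' (by omega) (by simp; omega) hlen' hent'
          rw [show (e ++ [a']).sum + l'.sum = c.sum + l.sum by simp; omega] at this
          exact this
        · -- ideal part
          exact Submodule.mem_sup_right (Ideal.mul_mem_left _ _ hi)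

lemma sort_monom (x : strictUpper) (r : ℕ) (l : List ℤ) (hlen : l.length = r) :
    ∃ m : Fin r → ℤ, Monotone m ∧ monom x m = (l.map (XX x)).prod ∧
      (∑ i, m i) = l.sum ∧ ∀ i, m i ∈ l := by
  classical
  set ls := l.mergeSort (· ≤ ·) with hls
  have hperm : ls.Perm l := List.mergeSort_perm l _
  have hsort : List.Pairwise (· ≤ ·) ls := List.pairwise_mergeSort' (· ≤ ·) l
  have hlen2 : ls.length = r := by rw [hperm.length_eq, hlen]
  set m : Fin r → ℤ := fun i => ls.get (Fin.cast hlen2.symm i) with hm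
  have hofn : List.ofFn m = ls :=
    (List.ofFn_congr hlen2 ls.get).symm.trans (List.ofFn_get ls)
  refine ⟨m, ?_, ?_, ?_, ?_⟩
  · intro i j hij
    refine hsort.rel_get_of_le ?_
    rw [Fin.le_def, Fin.coe_cast, Fin.coe_cast]
    exact hij
  · unfold monom
    have : (List.ofFn fun i => XX x (m i)) = (List.ofFn m).map (XX x) := by
      rw [List.map_ofFn]; rfl
    rw [this, hofn]
    exact List.Perm.prod_eq' (hperm.map (XX x))
      (List.pairwise_map.mpr (pairwise_all _ (fun a b => XX_commute_self x a b) ls))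
  · have h1 : (List.ofFn m).sum = ∑ i, m i := List.sum_ofFn
    rw [hofn] at h1
    rw [← h1, hperm.sum_eq]
  · intro i
    have : m i ∈ ls := by
      rw [← hofn]
      exact List.mem_ofFn.mpr ⟨i, rfl⟩
    exact hperm.mem_iff.mp this


/-- Lemma 3.5(2) of the paper: for `r₁, r₂ ≥ 1`, `m_{1,2} ≤ ⋯ ≤ m_{r₂,2}` with
`m_{r₂,2} ≥ r₁ − 1` and `m_{1,1} ≤ ⋯ ≤ m_{r₁,1} ≤ −1`, the monomial
`x_{α₂}(m_{1,2})⋯x_{α₂}(m_{r₂,2})x_{α₁}(m_{1,1})⋯x_{α₁}(m_{r₁,1})` is a ℂ-linear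
combination of such monomials with `m'_{r₂,2} ≤ r₁ − 2`, `m'_{r₁,1} ≤ −1` and the
same total index sum, plus an element of U(n̄)n̄⁺, plus an element of the left
ideal U(n̄)·x_{α₂}(−1). -/
theorem statement5 (r1 r2 : ℕ) (hr1 : 1 ≤ r1) (hr2 : 1 ≤ r2)
    (m2 : Fin r2 → ℤ) (m1 : Fin r1 → ℤ)
    (hm2 : Monotone m2) (hm1 : Monotone m1)
    (hm1neg : ∀ i, m1 i ≤ -1)
    (hm2big : (r1 : ℤ) - 1 ≤ m2 ⟨r2 - 1, by omega⟩) :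
    ∃ v ∈ Submodule.span ℂ {u : Uenv |
        ∃ (m2' : Fin r2 → ℤ) (m1' : Fin r1 → ℤ),
          Monotone m2' ∧ Monotone m1' ∧
          (∀ i, m2' i ≤ (r1 : ℤ) - 2) ∧ (∀ i, m1' i ≤ -1) ∧
          ((∑ i, m2' i) + ∑ i, m1' i = (∑ i, m2 i) + ∑ i, m1 i) ∧
          u = monom xa2 m2' * monom xa1 m1'},
      ∃ w ∈ UNplus, ∃ z ∈ Ideal.span {XX xa2 (-1)},
        monom xa2 m2 * monom xa1 m1 = v + w + z := by
  classical
  set c : List ℤ := List.ofFn m2 with hc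
  set l : List ℤ := List.ofFn m1 with hl
  have hPc : monom xa2 m2 = P2 c := by
    unfold monom P2
    rw [hc, List.map_ofFn]
    rfl
  have hPl : monom xa1 m1 = P1 l := by
    unfold monom P1
    rw [hl, List.map_ofFn]
    rfl
  have hclen : c.length = r2 := List.length_ofFn
  have hllen : l.length = r1 := List.length_ofFn
  have hlent : ∀ x ∈ l, x ≤ -1 := by
    intro x hx
    obtain ⟨i, rfl⟩ := List.mem_ofFn.mp (hl ▸ hx)
    exact hm1neg i
  have hmain := mainlem r1 r2 (meas r1 c) c l le_rfl hclen hllen hlent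
  have hsumc : c.sum = ∑ i, m2 i := by rw [hc]; exact List.sum_ofFn
  have hsuml : l.sum = ∑ i, m1 i := by rw [hl]; exact List.sum_ofFn
  -- pull the span part into the required shape
  rcases Submodule.mem_sup.mp hmain with ⟨v, hv, q, hq, hvq⟩
  rcases Submodule.mem_sup.mp (hq : q ∈ (Iall : Submodule Uenv Uenv)) with ⟨w, hw, z, hz, hwz⟩
  refine ⟨v, ?_, w, hw, z, hz, ?_⟩
  · -- v is in the desired span
    have hle : Submodule.span ℂ (SPfull r1 r2 (c.sum + l.sum)) ≤
        Submodule.span ℂ {u : Uenv |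
          ∃ (m2' : Fin r2 → ℤ) (m1' : Fin r1 → ℤ),
            Monotone m2' ∧ Monotone m1' ∧
            (∀ i, m2' i ≤ (r1 : ℤ) - 2) ∧ (∀ i, m1' i ≤ -1) ∧
            ((∑ i, m2' i) + ∑ i, m1' i = (∑ i, m2 i) + ∑ i, m1 i) ∧
            u = monom xa2 m2' * monom xa1 m1'} := by
      apply Submodule.span_le.mpr
      rintro u ⟨c', l', hc'len, hl'len, hc'bd, hl'bd, hsum', rfl⟩
      apply Submodule.subset_span
      obtain ⟨m2', hmono2, hmon2, hsum2, hmem2⟩ := sort_monom xa2 r2 c' hc'len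
      obtain ⟨m1', hmono1, hmon1, hsum1, hmem1⟩ := sort_monom xa1 r1 l' hl'len
      refine ⟨m2', m1', hmono2, hmono1, ?_, ?_, ?_, ?_⟩
      · intro i; exact hc'bd _ (hmem2 i)
      · intro i; exact hl'bd _ (hmem1 i)
      · rw [hsum2, hsum1, ← hsumc, ← hsuml]; omega
      · rw [hmon2, hmon1]; rfl
    exact hle hv
  · rw [hPc, hPl, ← hvq, ← hwz]
    abel

end
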